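/- Let f, g : ℝ → ℝ with f(x)/g(x) → 1 as x → ∞, g smooth and in the class 𝓡 (all ratios x·g^(j+1)/g^(j) have real limits), g nonvanishing with all derivatives nonvanishing, and suppose f'(x)/g'(x) converges. If additionally lim x·g'(x)/g(x) = α ≠ 0 and lim x·f'(x)/f(x) exists, then lim_{x→∞} x·f'(x)/f(x) = α. -/

import Mathlib

open Filter Set

/-- If `x * g'/g → α > 0` then `|g| → ∞`. -/
lemma grow_aux (g : ℝ → ℝ) (x₀ α : ℝ) (hα : 0 < α)
    (hgd : DifferentiableOn ℝ g (Ici x₀)) (hgne : ∀ x ∈ Ici x₀, g x ≠ 0)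
    (h2 : Tendsto (fun x => x * deriv g x / g x) atTop (nhds α)) :
    Tendsto (fun x => |g x|) atTop atTop := by
  -- pick x₁
  have hev : ∀ᶠ x in atTop, α / 2 < x * deriv g x / g x :=
    h2.eventually (eventually_gt_nhds (by linarith))
  obtain ⟨x₁, hx₁⟩ := ((hev.and (eventually_gt_atTop (max x₀ 0))).and
    (eventually_gt_atTop 0)).exists_forall_of_atTop
  have hx₁' : ∀ x, x₁ ≤ x → α / 2 < x * deriv g x / g x ∧ max x₀ 0 < x ∧ 0 < x :=
    fun x hx => ⟨(hx₁ x hx).1.1, (hx₁ x hx).1.2, (hx₁ x hx).2⟩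
  set h : ℝ → ℝ := fun x => Real.log (g x) with hh
  have hd : ∀ x, x₁ ≤ x → HasDerivAt h (deriv g x / g x) x := by
    intro x hx
    have hx0 : x₀ < x := lt_of_le_of_lt (le_max_left _ _) (hx₁' x hx).2.1
    have hgx : g x ≠ 0 := hgne x (le_of_lt hx0)
    have hdg : DifferentiableAt ℝ g x := hgd.differentiableAt (Ici_mem_nhds hx0)
    have := (Real.hasDerivAt_log hgx).comp x hdg.hasDerivAt
    rw [div_eq_inv_mul]; exact this
  set φ : ℝ → ℝ := fun x => h x - α / 2 * Real.log x with hφ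
  have hφd : ∀ x, x₁ ≤ x → HasDerivAt φ (deriv g x / g x - α / 2 * x⁻¹) x := by
    intro x hx
    have hx0 : (0:ℝ) < x := (hx₁' x hx).2.2
    exact (hd x hx).sub (((Real.hasDerivAt_log hx0.ne').const_mul (α / 2)))
  have hmono : MonotoneOn φ (Ici x₁) := by
    apply monotoneOn_of_deriv_nonneg (convex_Ici x₁)
    · intro x hx
      exact ((hφd x hx).differentiableAt).continuousAt.continuousWithinAt
    · intro x hx
      rw [interior_Ici] at hx
      exact ((hφd x hx.le).differentiableAt).differentiableWithinAt
    · intro x hx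
      rw [interior_Ici] at hx
      rw [(hφd x hx.le).deriv]
      have hx0 : (0:ℝ) < x := (hx₁' x hx.le).2.2
      have h1 : α / 2 < x * (deriv g x / g x) := by
        have := (hx₁' x hx.le).1
        rwa [mul_div_assoc] at this
      have h1' : α / 2 < deriv g x / g x * x := by rw [mul_comm]; exact h1
      have h2' : α / 2 / x < deriv g x / g x := (div_lt_iff₀ hx0).2 h1'
      have : α / 2 * x⁻¹ < deriv g x / g x := by
        rw [div_eq_mul_inv] at h2'; exact h2'
      linarith
  have hlb : ∀ x, x₁ ≤ x → h x₁ - α / 2 * Real.log x₁ + α / 2 * Real.log x ≤ h x := by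
    intro x hx
    have h5 : h x₁ - α / 2 * Real.log x₁ ≤ h x - α / 2 * Real.log x :=
      hmono self_mem_Ici hx hx
    linarith
  have htend : Tendsto h atTop atTop := by
    apply tendsto_atTop_mono' atTop (eventually_atTop.2 ⟨x₁, hlb⟩)
    exact tendsto_atTop_add_const_left _ _
      (Real.tendsto_log_atTop.const_mul_atTop (by linarith))
  have heq : ∀ x, x₁ ≤ x → Real.exp (h x) = |g x| := by
    intro x hx
    have hx0 : x₀ < x := lt_of_le_of_lt (le_max_left _ _) (hx₁' x hx).2.1
    have hgx : g x ≠ 0 := hgne x (le_of_lt hx0)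
    rw [hh]
    simp only []
    rw [show Real.log (g x) = Real.log |g x| from (Real.log_abs _).symm]
    exact Real.exp_log (abs_pos.2 hgx)
  exact (Real.tendsto_exp_atTop.comp htend).congr'
    (eventually_atTop.2 ⟨x₁, fun x hx => heq x hx⟩)

/-- (III(iv) of the paper, for first derivatives) If `f/g → 1`, `g` nonvanishing with
nonvanishing derivative, `x g'/g → α ≠ 0`, `f'/g'` converges, and `x f'/f → β` exists,
then `β = α`. -/
theorem stmt16 (f g : ℝ → ℝ) (x₀ α β c : ℝ)
    (hf : DifferentiableOn ℝ f (Ici x₀)) (hgd : DifferentiableOn ℝ g (Ici x₀))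
    (hfne : ∀ x ∈ Ici x₀, f x ≠ 0) (hgne : ∀ x ∈ Ici x₀, g x ≠ 0)
    (hgdne : ∀ x ∈ Ici x₀, deriv g x ≠ 0)
    (h1 : Tendsto (fun x => f x / g x) atTop (nhds 1))
    (h2 : Tendsto (fun x => x * deriv g x / g x) atTop (nhds α)) (hα : α ≠ 0)
    (h3 : Tendsto (fun x => deriv f x / deriv g x) atTop (nhds c))
    (h4 : Tendsto (fun x => x * deriv f x / f x) atTop (nhds β)) :
    β = α := by
  have hfa : ∀ x, x₀ < x → DifferentiableAt ℝ f x :=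
    fun x hx => hf.differentiableAt (Ici_mem_nhds hx)
  have hga : ∀ x, x₀ < x → DifferentiableAt ℝ g x :=
    fun x hx => hgd.differentiableAt (Ici_mem_nhds hx)
  -- g/f → 1
  have hgf : Tendsto (fun x => g x / f x) atTop (nhds 1) := by
    have := h1.inv₀ one_ne_zero
    simpa [inv_div] using this
  -- c = 1
  have hc : c = 1 := by
    rcases lt_or_gt_of_ne hα with hneg | hpos
    · -- α < 0 : apply grow_aux to g⁻¹, deduce g → 0, f → 0, l'Hôpital directly
      have hGd : DifferentiableOn ℝ (fun x => (g x)⁻¹) (Ici x₀) := hgd.inv hgne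
      have hG2 : Tendsto (fun x => x * deriv (fun y => (g y)⁻¹) x / (g x)⁻¹) atTop (nhds (-α)) := by
        apply Tendsto.congr' _ h2.neg
        filter_upwards [eventually_gt_atTop x₀] with x hx
        have hgx : g x ≠ 0 := hgne x hx.le
        have hD : deriv (fun y => (g y)⁻¹) x = -(deriv g x) / (g x) ^ 2 :=
          ((hga x hx).hasDerivAt.inv hgx).deriv
        rw [hD]
        field_simp
      have hGne : ∀ x ∈ Ici x₀, (g x)⁻¹ ≠ 0 := fun x hx => inv_ne_zero (hgne x hx)
      have hGrow := grow_aux _ x₀ (-α) (by linarith) hGd hGne hG2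
      have hg0 : Tendsto g atTop (nhds 0) := by
        rw [tendsto_zero_iff_abs_tendsto_zero]
        have : Tendsto (fun x => |(g x)⁻¹|⁻¹) atTop (nhds 0) := hGrow.inv_tendsto_atTop
        simpa [Function.comp_def, abs_inv] using this
      have hf0 : Tendsto f atTop (nhds 0) := by
        have := h1.mul hg0
        rw [mul_zero] at this
        apply this.congr'
        filter_upwards [eventually_gt_atTop x₀] with x hx
        field_simp [hgne x hx.le]
      have := deriv.lhopital_zero_atTop
        (f := f) (g := g)
        (eventually_atTop.2 ⟨x₀ + 1, fun x hx => hfa x (by linarith)⟩)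
        (eventually_atTop.2 ⟨x₀ + 1, fun x hx => hgdne x (mem_Ici.2 (by linarith))⟩)
        hf0 hg0 h3
      exact tendsto_nhds_unique this h1
    · -- α > 0 : |g| → ∞, use 1/f, 1/g
      have hGrow := grow_aux g x₀ α hpos hgd hgne h2
      have hg0 : Tendsto (fun x => (g x)⁻¹) atTop (nhds 0) := by
        rw [tendsto_zero_iff_abs_tendsto_zero]
        have : Tendsto (fun x => |g x|⁻¹) atTop (nhds 0) := hGrow.inv_tendsto_atTop
        simpa [Function.comp_def, abs_inv] using this
      have hf0 : Tendsto (fun x => (f x)⁻¹) atTop (nhds 0) := by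
        have := hg0.mul hgf
        rw [zero_mul] at this
        apply this.congr'
        filter_upwards [eventually_gt_atTop x₀] with x hx
        field_simp [hgne x hx.le]
      -- derivatives
      have hdivlim : Tendsto (fun x =>
          deriv (fun y => (f y)⁻¹) x / deriv (fun y => (g y)⁻¹) x) atTop (nhds c) := by
        have hc1 : Tendsto (fun x => (deriv f x / deriv g x) * (g x / f x) ^ 2) atTop
            (nhds (c * 1 ^ 2)) := h3.mul (hgf.pow 2)
        rw [one_pow, mul_one] at hc1
        apply hc1.congr'
        filter_upwards [eventually_gt_atTop x₀] with x hx
        have hfx := hfne x hx.le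
        have hgx := hgne x hx.le
        rw [((hfa x hx).hasDerivAt.fun_inv hfx).deriv, ((hga x hx).hasDerivAt.fun_inv hgx).deriv]
        field_simp
      have hL := deriv.lhopital_zero_atTop
        (f := fun x => (f x)⁻¹) (g := fun x => (g x)⁻¹)
        (eventually_atTop.2 ⟨x₀ + 1, fun x hx =>
          ((hfa x (by linarith)).inv (hfne x (mem_Ici.2 (by linarith))))⟩)
        (eventually_atTop.2 ⟨x₀ + 1, fun x hx => by
          rw [((hga x (by linarith : x₀ < x)).hasDerivAt.fun_inv
            (hgne x (mem_Ici.2 (by linarith)))).deriv]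
          exact div_ne_zero (neg_ne_zero.2 (hgdne x (mem_Ici.2 (by linarith))))
            (pow_ne_zero 2 (hgne x (mem_Ici.2 (by linarith))))⟩)
        hf0 hg0 hdivlim
      -- (1/f)/(1/g) = g/f → 1
      have hL' : Tendsto (fun x => g x / f x) atTop (nhds c) := by
        apply hL.congr'
        filter_upwards [] with x
        rw [inv_div_inv]
      exact (tendsto_nhds_unique hL' hgf)
  -- final computation
  have hprod : Tendsto (fun x =>
      (deriv f x / deriv g x) * (x * deriv g x / g x) * (g x / f x)) atTop
      (nhds (c * α * 1)) := (h3.mul h2).mul hgf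
  rw [mul_one, hc, one_mul] at hprod
  have : Tendsto (fun x => x * deriv f x / f x) atTop (nhds α) := by
    apply hprod.congr'
    filter_upwards [eventually_gt_atTop x₀] with x hx
    field_simp [hfne x hx.le, hgne x hx.le, hgdne x hx.le]
  exact tendsto_nhds_unique h4 this
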